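/- Let λ > 0, T > 0, n ≥ 1, and R > 0. Then ∫₀ᵗ ∫_{B(x,R+1) \ B(x,R)} [ n(t−s)^{−(n+1)/2} + (t−s)^{−n/2} ] exp(−λ|x−y|²/(4(t−s))) dy ds ≤ (|s_n|/2)(4/λ)^{n/2} (T + 2n√T) · Γ_up(n/2, λR²/(4T)) for every x ∈ ℝⁿ and t ∈ (0,T], where |s_n| is the surface area of the unit sphere in ℝⁿ and Γ_up(a,z) = ∫_z^∞ e^{−w} w^{a−1} dw is the upper incomplete Gamma function. In particular, this bound tends to 0 as R → ∞, uniformly in x and t. -/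

import Mathlib

set_option maxHeartbeats 1000000

open MeasureTheory Real Set Metric Filter

/-- Surface area of the unit sphere in ℝⁿ: `2 π^{n/2} / Γ(n/2)`. -/
noncomputable def unitSphereArea (n : ℕ) : ℝ :=
  2 * π ^ ((n : ℝ) / 2) / Real.Gamma ((n : ℝ) / 2)

/-- The upper incomplete Gamma function `Γ_up(a, z) = ∫_z^∞ e^{-w} w^{a-1} dw`. -/
noncomputable def GammaUp (a z : ℝ) : ℝ :=
  ∫ w in Ioi z, Real.exp (-w) * w ^ (a - 1)

lemma gammaUp_integrableOn {a : ℝ} (ha : 0 < a) {z : ℝ} (hz : 0 ≤ z) :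
    IntegrableOn (fun w => Real.exp (-w) * w ^ (a - 1)) (Ioi z) :=
  (Real.GammaIntegral_convergent ha).mono_set (Ioi_subset_Ioi hz)

lemma gammaUp_nonneg (a : ℝ) {z : ℝ} (hz : 0 ≤ z) : 0 ≤ GammaUp a z :=
  setIntegral_nonneg measurableSet_Ioi fun w hw =>
    mul_nonneg (Real.exp_nonneg _) (Real.rpow_nonneg (le_trans hz (le_of_lt hw)) _)

lemma gammaUp_anti {a : ℝ} (ha : 0 < a) {z₁ z₂ : ℝ} (h0 : 0 ≤ z₁) (h : z₁ ≤ z₂) :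
    GammaUp a z₂ ≤ GammaUp a z₁ := by
  refine setIntegral_mono_set (gammaUp_integrableOn ha h0) ?_ (HasSubset.Subset.eventuallyLE (Ioi_subset_Ioi h))
  filter_upwards [ae_restrict_mem measurableSet_Ioi] with w hw
  exact mul_nonneg (Real.exp_nonneg _) (Real.rpow_nonneg (le_trans h0 (le_of_lt hw)) _)

lemma gammaUp_tendsto {a : ℝ} (ha : 0 < a) : Tendsto (GammaUp a) atTop (nhds 0) := by
  have hint := Real.GammaIntegral_convergent ha
  have h1 : Tendsto (fun z => ∫ w in (0:ℝ)..z, Real.exp (-w) * w ^ (a - 1)) atTop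
      (nhds (∫ w in Ioi (0:ℝ), Real.exp (-w) * w ^ (a - 1))) :=
    intervalIntegral_tendsto_integral_Ioi 0 hint tendsto_id
  have h2 : Tendsto (fun z => (∫ w in Ioi (0:ℝ), Real.exp (-w) * w ^ (a - 1))
      - ∫ w in (0:ℝ)..z, Real.exp (-w) * w ^ (a - 1)) atTop (nhds 0) := by
    have := (tendsto_const_nhds (x := (∫ w in Ioi (0:ℝ), Real.exp (-w) * w ^ (a - 1))) (f := atTop)).sub h1
    simpa using this
  refine h2.congr' ?_
  filter_upwards [eventually_ge_atTop (0:ℝ)] with z hz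
  have hsplit : (∫ w in Ioi (0:ℝ), Real.exp (-w) * w ^ (a - 1))
      = (∫ w in Ioc 0 z, Real.exp (-w) * w ^ (a - 1)) + ∫ w in Ioi z, Real.exp (-w) * w ^ (a - 1) := by
    rw [← setIntegral_union (Ioc_disjoint_Ioi le_rfl) measurableSet_Ioi
      (hint.mono_set Ioc_subset_Ioi_self) (gammaUp_integrableOn ha hz), Ioc_union_Ioi_eq_Ioi hz]
  rw [intervalIntegral.integral_of_le hz, GammaUp]
  rw [hsplit]; ring

lemma tail_integral {a c R : ℝ} (ha : 0 < a) (hc : 0 < c) (hR : 0 < R) :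
    ∫ r in Ioi R, r ^ (2 * a - 1) * Real.exp (-(c * r ^ 2))
      = (1 / 2) * c ^ (-a) * GammaUp a (c * R ^ 2) := by
  have hca : (0:ℝ) < c ^ a := Real.rpow_pos_of_pos hc a
  set g : ℝ → ℝ := fun w => Real.exp (-w) * w ^ (a - 1) with hg
  set f : ℝ → ℝ := fun r => c * r ^ 2 with hf
  set f' : ℝ → ℝ := fun r => c * (2 * r) with hf'
  -- pointwise identity on Ici R
  have key : ∀ r ∈ Ici R, (g ∘ f) r * f' r
      = (2 * c ^ a) * (r ^ (2 * a - 1) * Real.exp (-(c * r ^ 2))) := by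
    intro r hr
    have hr0 : 0 < r := lt_of_lt_of_le hR hr
    have h1 : (c * r ^ 2) ^ (a - 1) = c ^ (a - 1) * r ^ (2 * (a - 1)) := by
      rw [Real.mul_rpow hc.le (sq_nonneg r), ← Real.rpow_natCast r 2,
        ← Real.rpow_mul hr0.le]
      norm_num
    have h2 : c ^ (a - 1) * c = c ^ a := by
      rw [Real.rpow_sub hc, Real.rpow_one, div_mul_cancel₀ _ hc.ne']
    have h3 : r ^ (2 * (a - 1)) * r = r ^ (2 * a - 1) := by
      nth_rewrite 2 [← Real.rpow_one r]
      rw [← Real.rpow_add hr0]; ring_nf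
    simp only [Function.comp, hg, hf, hf']
    calc Real.exp (-(c * r ^ 2)) * (c * r ^ 2) ^ (a - 1) * (c * (2 * r))
        = 2 * ((c ^ (a - 1) * c) * ((r ^ (2 * (a - 1)) * r) * Real.exp (-(c * r ^ 2)))) := by
          rw [h1]; ring
      _ = (2 * c ^ a) * (r ^ (2 * a - 1) * Real.exp (-(c * r ^ 2))) := by rw [h2, h3]; ring
  have hsub : Ici R ⊆ Ioi 0 := fun r hr => lt_of_lt_of_le hR hr
  have himg : ∀ r ∈ Ici R, f r ∈ Ioi (0:ℝ) := fun r hr =>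
    mul_pos hc (pow_pos (lt_of_lt_of_le hR hr) 2)
  have hcov : (∫ r in Ioi R, (g ∘ f) r * f' r) = ∫ u in Ioi (f R), g u := by
    apply MeasureTheory.integral_comp_mul_deriv_Ioi
    · fun_prop
    · exact (tendsto_pow_atTop (two_ne_zero)).const_mul_atTop hc
    · intro r hr
      have : HasDerivAt f (c * (2 * r)) r := by
        simpa using ((hasDerivAt_pow 2 r).const_mul c)
      exact this.hasDerivWithinAt
    · intro w hw
      obtain ⟨r, hr, rfl⟩ := hw
      have hw0 : 0 < f r := himg r (by simp only [mem_Ici, mem_Ioi] at hr ⊢; linarith)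
      apply ContinuousAt.continuousWithinAt
      exact ((Real.continuous_exp.comp continuous_neg).continuousAt).mul
        (Real.continuousAt_rpow_const _ _ (Or.inl hw0.ne'))
    · apply (Real.GammaIntegral_convergent ha).mono_set
      rintro w ⟨r, hr, rfl⟩
      exact himg r hr
    · have base : Integrable (fun r : ℝ => r ^ (2 * a - 1) * Real.exp (-c * r ^ 2)) :=
        integrable_rpow_mul_exp_neg_mul_sq hc (by linarith)
      refine (((base.const_mul (2 * c ^ a)).integrableOn).congr_fun ?_ measurableSet_Ici)
      intro r hr
      simp only [neg_mul]
      exact (key r hr).symm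
  have hLHS : (∫ r in Ioi R, (g ∘ f) r * f' r)
      = (2 * c ^ a) * ∫ r in Ioi R, r ^ (2 * a - 1) * Real.exp (-(c * r ^ 2)) := by
    rw [← MeasureTheory.integral_const_mul]
    exact setIntegral_congr_fun measurableSet_Ioi fun r hr => key r (le_of_lt (mem_Ioi.mp hr))
  have hfR : f R = c * R ^ 2 := rfl
  have : (2 * c ^ a) * ∫ r in Ioi R, r ^ (2 * a - 1) * Real.exp (-(c * r ^ 2))
      = GammaUp a (c * R ^ 2) := by rw [← hLHS, hcov, hfR]; rfl
  rw [← this, Real.rpow_neg hc.le]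
  field_simp

lemma sphere_vol {n : ℕ} (hn : 1 ≤ n) :
    (n : ℝ) * (volume (ball (0 : EuclideanSpace ℝ (Fin n)) 1)).toReal = unitSphereArea n := by
  haveI : Nonempty (Fin n) := ⟨⟨0, hn⟩⟩
  have hn0 : (0:ℝ) < (n:ℝ) := by exact_mod_cast hn
  rw [EuclideanSpace.volume_ball, unitSphereArea]
  simp only [Fintype.card_fin, ENNReal.ofReal_one, one_pow, one_mul]
  have hg : (0:ℝ) < Real.Gamma ((n:ℝ)/2 + 1) := Real.Gamma_pos_of_pos (by positivity)
  rw [ENNReal.toReal_ofReal (by positivity)]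
  have h1 : Real.sqrt π ^ n = π ^ ((n:ℝ)/2) := by
    rw [Real.sqrt_eq_rpow, ← Real.rpow_natCast (π ^ ((1:ℝ)/2)) n, ← Real.rpow_mul pi_pos.le]
    ring_nf
  have h2 : Real.Gamma ((n:ℝ)/2 + 1) = ((n:ℝ)/2) * Real.Gamma ((n:ℝ)/2) :=
    Real.Gamma_add_one (by positivity)
  have hΓ : Real.Gamma ((n:ℝ)/2) ≠ 0 := (Real.Gamma_pos_of_pos (by positivity)).ne'
  rw [h1, h2]
  field_simp

lemma spatial {n : ℕ} (hn : 1 ≤ n) {c R : ℝ} (hc : 0 < c) (hR : 0 < R)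
    (x : EuclideanSpace ℝ (Fin n)) :
    (∫ y in (closedBall x (R + 1) \ closedBall x R), Real.exp (-(c * ‖x - y‖ ^ 2)))
      ≤ unitSphereArea n * ((1 / 2) * c ^ (-((n : ℝ) / 2)) * GammaUp ((n : ℝ) / 2) (c * R ^ 2)) := by
  haveI : Nontrivial (EuclideanSpace ℝ (Fin n)) :=
    Module.nontrivial_of_finrank_pos (R := ℝ) (by rw [finrank_euclideanSpace_fin]; omega)
  let E := EuclideanSpace ℝ (Fin n)
  show (∫ y : E in (closedBall x (R + 1) \ closedBall x R), Real.exp (-(c * ‖x - y‖ ^ 2)))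
      ≤ unitSphereArea n * ((1 / 2) * c ^ (-((n : ℝ) / 2)) * GammaUp ((n : ℝ) / 2) (c * R ^ 2))
  set h : ℝ → ℝ := (Ici R).indicator (fun r => Real.exp (-(c * r ^ 2))) with hh
  have hnonneg : ∀ r, 0 ≤ h r := fun r => Set.indicator_nonneg (fun r _ => (Real.exp_pos _).le) r
  have hmeas : Measurable h := Measurable.indicator (by fun_prop) measurableSet_Ici
  have hGauss : Integrable (fun v : E => Real.exp (-(c * ‖v‖ ^ 2))) := by
    have h1 := GaussianFourier.integrable_cexp_neg_mul_sq_norm_add (V := E) (b := (c : ℂ))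
      (by simpa using hc) 0 0
    refine h1.norm.congr ?_
    filter_upwards with v
    rw [Complex.norm_exp]
    congr 1
    push_cast
    simp only [Complex.add_re, Complex.mul_re, Complex.neg_re, Complex.neg_im,
      Complex.ofReal_re, Complex.ofReal_im, Complex.zero_re, Complex.zero_im,
      ← Complex.ofReal_pow]
    ring
  have hGaussT : Integrable (fun y : E => Real.exp (-(c * ‖x - y‖ ^ 2))) := by
    have := hGauss.comp_sub_left x
    simpa using this
  have hHmeas : Measurable (fun y : E => h ‖x - y‖) := hmeas.comp (by fun_prop)
  have hH : Integrable (fun y : E => h ‖x - y‖) := by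
    refine hGaussT.mono' hHmeas.aestronglyMeasurable ?_
    filter_upwards with y
    rw [Real.norm_of_nonneg (hnonneg _)]
    exact Set.indicator_le_self' (fun r _ => (Real.exp_pos _).le) _
  have hann : MeasurableSet (closedBall x (R + 1) \ closedBall x R) :=
    measurableSet_closedBall.diff measurableSet_closedBall
  have step1 : (∫ y in (closedBall x (R + 1) \ closedBall x R), Real.exp (-(c * ‖x - y‖ ^ 2)))
      ≤ ∫ y : E, h ‖x - y‖ := by
    rw [← integral_indicator hann]
    refine integral_mono_of_nonneg ?_ hH ?_
    · filter_upwards with y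
      exact Set.indicator_nonneg (fun y _ => (Real.exp_pos _).le) y
    · filter_upwards with y
      by_cases hy : y ∈ closedBall x (R + 1) \ closedBall x R
      · rw [Set.indicator_of_mem hy, hh, Set.indicator_of_mem]
        have : R < dist y x := by simpa [mem_closedBall, not_le] using hy.2
        rw [mem_Ici, ← dist_eq_norm, dist_comm]
        exact this.le
      · rw [Set.indicator_of_notMem hy]
        exact hnonneg _
  have step2 : (∫ y : E, h ‖x - y‖) = ∫ y : E, h ‖y‖ :=
    integral_sub_left_eq_self (fun y : E => h ‖y‖) volume x
  have step3 : (∫ y : E, h ‖y‖)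
      = n • (volume (ball (0 : E) 1)).toReal • ∫ r in Ioi (0:ℝ), r ^ (n - 1) • h r := by
    rw [integral_fun_norm_addHaar volume h]
    congr 1 <;> rw [finrank_euclideanSpace_fin]
    rfl
  have step4 : (∫ r in Ioi (0:ℝ), r ^ (n - 1) • h r)
      = ∫ r in Ioi R, r ^ (2 * ((n:ℝ) / 2) - 1) * Real.exp (-(c * r ^ 2)) := by
    have hind : ∀ r : ℝ, r ^ (n - 1) • h r
        = (Ici R).indicator (fun r => r ^ (n - 1) * Real.exp (-(c * r ^ 2))) r := by
      intro r
      simp only [hh, smul_eq_mul, Set.indicator_apply]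
      split_ifs <;> simp
    simp_rw [hind]
    rw [setIntegral_indicator measurableSet_Ici]
    have hinter : Ioi (0:ℝ) ∩ Ici R = Ici R :=
      inter_eq_right.mpr (fun r hr => lt_of_lt_of_le hR hr)
    rw [hinter, integral_Ici_eq_integral_Ioi]
    refine setIntegral_congr_fun measurableSet_Ioi (fun r hr => ?_)
    have hr0 : (0:ℝ) < r := hR.trans hr
    have hcast : r ^ (n - 1 : ℕ) = r ^ ((n:ℝ) - 1) := by
      rw [← Real.rpow_natCast r (n - 1), Nat.cast_sub hn, Nat.cast_one]
    have hexp : 2 * ((n:ℝ) / 2) - 1 = (n:ℝ) - 1 := by ring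
    rw [hcast, hexp]
  have tail := tail_integral (a := (n:ℝ)/2) (by positivity) hc hR
  calc (∫ y in (closedBall x (R + 1) \ closedBall x R), Real.exp (-(c * ‖x - y‖ ^ 2)))
      ≤ ∫ y : E, h ‖x - y‖ := step1
    _ = n • (volume (ball (0 : E) 1)).toReal • ∫ r in Ioi (0:ℝ), r ^ (n - 1) • h r := by
        rw [step2, step3]
    _ = (n : ℝ) * (volume (ball (0 : E) 1)).toReal
        * ((1 / 2) * c ^ (-((n : ℝ) / 2)) * GammaUp ((n : ℝ) / 2) (c * R ^ 2)) := by
        rw [step4, tail, nsmul_eq_mul, smul_eq_mul]; ring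
    _ = unitSphereArea n * ((1 / 2) * c ^ (-((n : ℝ) / 2)) * GammaUp ((n : ℝ) / 2) (c * R ^ 2)) := by
        rw [sphere_vol hn]

lemma unitSphereArea_nonneg (n : ℕ) (hn : 1 ≤ n) : 0 ≤ unitSphereArea n := by
  have hn0 : (0:ℝ) < (n:ℝ) := by exact_mod_cast hn
  have := Real.Gamma_pos_of_pos (show (0:ℝ) < (n:ℝ)/2 by positivity)
  exact div_nonneg (by positivity) this.le

theorem stmt8 (n : ℕ) (hn : 1 ≤ n) (lam T : ℝ) (hlam : 0 < lam) (hT : 0 < T) :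
    (∀ R : ℝ, 0 < R → ∀ x : EuclideanSpace ℝ (Fin n), ∀ t ∈ Ioc (0 : ℝ) T,
      (∫ s in Icc (0 : ℝ) t, ∫ y in (closedBall x (R + 1) \ closedBall x R),
          ((n : ℝ) * (t - s) ^ (-((n : ℝ) + 1) / 2) + (t - s) ^ (-(n : ℝ) / 2)) *
            Real.exp (-lam * ‖x - y‖ ^ 2 / (4 * (t - s))))
        ≤ (unitSphereArea n / 2) * (4 / lam) ^ ((n : ℝ) / 2) *
            (T + 2 * n * Real.sqrt T) * GammaUp ((n : ℝ) / 2) (lam * R ^ 2 / (4 * T))) ∧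
    Tendsto (fun R : ℝ =>
        (unitSphereArea n / 2) * (4 / lam) ^ ((n : ℝ) / 2) *
          (T + 2 * n * Real.sqrt T) * GammaUp ((n : ℝ) / 2) (lam * R ^ 2 / (4 * T)))
      atTop (nhds 0) := by
  have hn0 : (0:ℝ) < (n:ℝ) := by exact_mod_cast hn
  have ha : (0:ℝ) < (n:ℝ)/2 := by positivity
  constructor
  · intro R hR x t ht
    obtain ⟨ht0, htT⟩ := ht
    set a : ℝ := (n:ℝ)/2 with haa
    set K : ℝ := (unitSphereArea n / 2) * (4 / lam) ^ a * GammaUp a (lam * R ^ 2 / (4 * T))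
      with hK
    have hKnn : 0 ≤ K := by
      refine mul_nonneg (mul_nonneg ?_ (Real.rpow_nonneg (by positivity) _))
        (gammaUp_nonneg _ (by positivity))
      exact div_nonneg (unitSphereArea_nonneg n hn) (by norm_num)
    -- pointwise-in-s bound
    have hG : ∀ s ∈ Icc (0:ℝ) t,
        (∫ y in (closedBall x (R + 1) \ closedBall x R),
          ((n : ℝ) * (t - s) ^ (-((n : ℝ) + 1) / 2) + (t - s) ^ (-(n : ℝ) / 2)) *
            Real.exp (-lam * ‖x - y‖ ^ 2 / (4 * (t - s))))
          ≤ K * ((n:ℝ) * (t - s) ^ (-(1:ℝ)/2) + 1) := by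
      intro s hs
      rcases eq_or_lt_of_le hs.2 with hst | hst
      · -- s = t
        have h0 : t - s = 0 := by rw [hst]; ring
        have e1 : (-((n:ℝ)+1)/2) ≠ 0 := ne_of_lt (by linarith)
        have e2 : (-(n:ℝ)/2) ≠ 0 := ne_of_lt (by linarith)
        have hzero : (∫ y in (closedBall x (R + 1) \ closedBall x R),
            ((n : ℝ) * (t - s) ^ (-((n : ℝ) + 1) / 2) + (t - s) ^ (-(n : ℝ) / 2)) *
              Real.exp (-lam * ‖x - y‖ ^ 2 / (4 * (t - s)))) = 0 := by
          simp only [h0, Real.zero_rpow e1, Real.zero_rpow e2, mul_zero, add_zero, zero_mul,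
            integral_zero]
        rw [hzero, h0, Real.zero_rpow (by norm_num : (-(1:ℝ)/2) ≠ 0), mul_zero, zero_add,
          mul_one]
        exact hKnn
      · have hτ : 0 < t - s := sub_pos.mpr hst
        have hτT : t - s ≤ T := by
          have := hs.1; linarith
        set τ := t - s with hτdef
        set c : ℝ := lam / (4 * τ) with hc
        have hc0 : 0 < c := by positivity
        have hA : (0:ℝ) ≤ (n : ℝ) * τ ^ (-((n : ℝ) + 1) / 2) + τ ^ (-(n : ℝ) / 2) := by
          positivity
        set A : ℝ := (n : ℝ) * τ ^ (-((n : ℝ) + 1) / 2) + τ ^ (-(n : ℝ) / 2) with hAdef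
        have hrw : ∀ y : EuclideanSpace ℝ (Fin n),
            A * Real.exp (-lam * ‖x - y‖ ^ 2 / (4 * τ)) = A * Real.exp (-(c * ‖x - y‖ ^ 2)) := by
          intro y
          congr 1
          rw [hc]
          field_simp
        calc (∫ y in (closedBall x (R + 1) \ closedBall x R),
                A * Real.exp (-lam * ‖x - y‖ ^ 2 / (4 * τ)))
            = A * ∫ y in (closedBall x (R + 1) \ closedBall x R),
                Real.exp (-(c * ‖x - y‖ ^ 2)) := by
              simp_rw [hrw]
              exact integral_const_mul A _
          _ ≤ A * (unitSphereArea n * ((1 / 2) * c ^ (-a) * GammaUp a (lam * R ^ 2 / (4 * T)))) := by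
              refine mul_le_mul_of_nonneg_left ?_ hA
              refine le_trans (spatial hn hc0 hR x) ?_
              refine mul_le_mul_of_nonneg_left ?_ (unitSphereArea_nonneg n hn)
              refine mul_le_mul_of_nonneg_left ?_ (by positivity)
              refine gammaUp_anti ha (by positivity) ?_
              rw [hc, div_mul_eq_mul_div]
              gcongr
              all_goals first | positivity | linarith
          _ = K * ((n:ℝ) * τ ^ (-(1:ℝ)/2) + 1) := by
              have hcpow : c ^ (-a) = (4 / lam) ^ a * τ ^ a := by
                rw [Real.rpow_neg hc0.le, ← Real.inv_rpow hc0.le, hc, inv_div,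
                  show (4 * τ) / lam = (4 / lam) * τ by ring,
                  Real.mul_rpow (by positivity) hτ.le]
              have hAτ : A * τ ^ a = (n:ℝ) * τ ^ (-(1:ℝ)/2) + 1 := by
                rw [hAdef, haa, add_mul, mul_assoc, ← Real.rpow_add hτ, ← Real.rpow_add hτ,
                  show -((n:ℝ)+1)/2 + (n:ℝ)/2 = -(1:ℝ)/2 by ring,
                  show -(n:ℝ)/2 + (n:ℝ)/2 = 0 by ring, Real.rpow_zero]
              rw [← hAτ, hcpow, hK]
              ring
    -- outer integral
    have hIIr : IntervalIntegrable (fun s : ℝ => (t - s) ^ (-(1:ℝ)/2)) volume 0 t := by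
      have h := ((intervalIntegral.intervalIntegrable_rpow' (a := 0) (b := t)
        (by norm_num : (-1:ℝ) < -(1:ℝ)/2)).comp_sub_left t)
      simpa using h.symm
    have hIOn : IntegrableOn (fun s : ℝ => K * ((n:ℝ) * (t - s) ^ (-(1:ℝ)/2) + 1)) (Icc 0 t) := by
      rw [integrableOn_Icc_iff_integrableOn_Ioc]
      exact ((((hIIr.const_mul _).add intervalIntegrable_const).const_mul K)).1
    have hmono : (∫ s in Icc (0 : ℝ) t, ∫ y in (closedBall x (R + 1) \ closedBall x R),
          ((n : ℝ) * (t - s) ^ (-((n : ℝ) + 1) / 2) + (t - s) ^ (-(n : ℝ) / 2)) *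
            Real.exp (-lam * ‖x - y‖ ^ 2 / (4 * (t - s))))
        ≤ ∫ s in Icc (0:ℝ) t, K * ((n:ℝ) * (t - s) ^ (-(1:ℝ)/2) + 1) := by
      rw [← integral_indicator measurableSet_Icc, ← integral_indicator measurableSet_Icc]
      refine integral_mono_of_nonneg ?_ ((integrable_indicator_iff measurableSet_Icc).2 hIOn) ?_
      · filter_upwards with s
        refine Set.indicator_nonneg (fun s hsm => ?_) s
        have hts : (0:ℝ) ≤ t - s := sub_nonneg.mpr hsm.2
        refine setIntegral_nonneg (measurableSet_closedBall.diff measurableSet_closedBall)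
          (fun y _ => ?_)
        refine mul_nonneg ?_ (Real.exp_nonneg _)
        exact add_nonneg (mul_nonneg (Nat.cast_nonneg n) (Real.rpow_nonneg hts _))
          (Real.rpow_nonneg hts _)
      · filter_upwards with s
        by_cases hsmem : s ∈ Icc (0:ℝ) t
        · rw [Set.indicator_of_mem hsmem, Set.indicator_of_mem hsmem]
          exact hG s hsmem
        · rw [Set.indicator_of_notMem hsmem, Set.indicator_of_notMem hsmem]
    have hval : (∫ s in Icc (0:ℝ) t, K * ((n:ℝ) * (t - s) ^ (-(1:ℝ)/2) + 1))
        = K * ((n:ℝ) * (2 * Real.sqrt t) + t) := by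
      rw [integral_Icc_eq_integral_Ioc, ← intervalIntegral.integral_of_le ht0.le,
        intervalIntegral.integral_const_mul,
        intervalIntegral.integral_add (hIIr.const_mul _) intervalIntegrable_const,
        intervalIntegral.integral_const_mul, intervalIntegral.integral_const]
      have h2 : (∫ s in (0:ℝ)..t, (t - s) ^ (-(1:ℝ)/2)) = 2 * Real.sqrt t := by
        rw [intervalIntegral.integral_comp_sub_left (fun u : ℝ => u ^ (-(1:ℝ)/2)) t]
        rw [sub_self, sub_zero, integral_rpow (Or.inl (by norm_num))]
        rw [Real.zero_rpow (by norm_num : (-(1:ℝ)/2 + 1) ≠ 0), Real.sqrt_eq_rpow]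
        norm_num
        ring
      rw [h2]
      simp only [smul_eq_mul, sub_zero, mul_one]
    refine le_trans hmono ?_
    rw [hval]
    have hsq : Real.sqrt t ≤ Real.sqrt T := Real.sqrt_le_sqrt htT
    have hfin : (n:ℝ) * (2 * Real.sqrt t) + t ≤ T + 2 * n * Real.sqrt T := by
      nlinarith [Real.sqrt_nonneg t]
    calc K * ((n:ℝ) * (2 * Real.sqrt t) + t) ≤ K * (T + 2 * n * Real.sqrt T) :=
          mul_le_mul_of_nonneg_left hfin hKnn
      _ = (unitSphereArea n / 2) * (4 / lam) ^ ((n : ℝ) / 2) *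
            (T + 2 * n * Real.sqrt T) * GammaUp ((n : ℝ) / 2) (lam * R ^ 2 / (4 * T)) := by
          rw [hK]; ring
  · have harg : Tendsto (fun R : ℝ => lam * R ^ 2 / (4 * T)) atTop atTop := by
      refine Tendsto.atTop_div_const (by positivity) ?_
      exact (tendsto_pow_atTop (two_ne_zero)).const_mul_atTop hlam
    have := ((gammaUp_tendsto ha).comp harg).const_mul
      ((unitSphereArea n / 2) * (4 / lam) ^ ((n : ℝ) / 2) * (T + 2 * n * Real.sqrt T))
    simpa [Function.comp, mul_assoc] using this
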